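/- arXiv:2601.09751 — 2 statements merged into one kernel-verified Lean document; each statement's English description precedes it below -/
import Mathlib

section
/- Let f : Γ → Θ be a locally injective homomorphism (graph immersion) between simple graphs. Suppose p is a walk in Γ from a to b of length n and q is a walk in Γ from a' to b' of length n, with f(p.getVert k) = f(q.getVert k) for all 0 ≤ k ≤ n (i.e., p and q are lifts of the same walk in Θ). If there exists an index 0 ≤ i ≤ n with p.getVert i = q.getVert i, then a = a', b = b', and p.getVert k = q.getVert k for all 0 ≤ k ≤ n, so p = q. (Two lifts of a common walk under an immersion that agree at a single position agree everywhere.) -/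
open SimpleGraph

/-- A graph homomorphism is *locally injective* (a graph immersion) if for every
vertex `v` and all neighbors `u`, `w` of `v`, `f u = f w` implies `u = w`. -/
def LocallyInjective {V W : Type*} {Γ : SimpleGraph V} {Θ : SimpleGraph W}
    (f : Γ →g Θ) : Prop :=
  ∀ ⦃v u w : V⦄, Γ.Adj v u → Γ.Adj v w → f u = f w → u = w

private lemma walk_ext_getVert {V : Type*} {Γ : SimpleGraph V} {u v : V} :
    ∀ (p q : Γ.Walk u v), p.length = q.length →
      (∀ k, p.getVert k = q.getVert k) → p = q := by
  intro p
  induction p with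
  | nil =>
    intro q hl _
    cases q with
    | nil => rfl
    | cons _ _ => simp at hl
  | @cons a c d hadj p ih =>
    intro q hl h
    cases q with
    | nil => simp at hl
    | @cons _ c' _ hadj' q' =>
      have hc : c = c' := by
        have := h 1
        simpa [SimpleGraph.Walk.getVert_cons _ _ one_ne_zero] using this
      subst hc
      have := ih q' (by simpa using hl) (fun k => by
        have := h (k + 1)
        simpa [SimpleGraph.Walk.getVert_cons_succ] using this)
      rw [this]

/-- Two lifts of a common walk under a graph immersion that agree at a single
position agree everywhere. -/
theorem lifts_eq_of_agree_at_one_index {V W : Type*}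
    {Γ : SimpleGraph V} {Θ : SimpleGraph W} (f : Γ →g Θ)
    (hf : LocallyInjective f) {a b a' b' : V} {n : ℕ}
    (p : Γ.Walk a b) (q : Γ.Walk a' b')
    (hp : p.length = n) (hq : q.length = n)
    (h : ∀ k ≤ n, f (p.getVert k) = f (q.getVert k))
    (hi : ∃ i ≤ n, p.getVert i = q.getVert i) :
    a = a' ∧ b = b' ∧ (∀ k ≤ n, p.getVert k = q.getVert k) ∧ HEq p q := by
  obtain ⟨i, hin, hE⟩ := hi
  have fwd : ∀ k, k < n → p.getVert k = q.getVert k →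
      p.getVert (k + 1) = q.getVert (k + 1) := by
    intro k hk he
    have hp1 : Γ.Adj (p.getVert k) (p.getVert (k + 1)) :=
      p.adj_getVert_succ (by omega)
    have hq1 : Γ.Adj (p.getVert k) (q.getVert (k + 1)) := by
      rw [he]; exact q.adj_getVert_succ (by omega)
    exact hf hp1 hq1 (h (k + 1) (by omega))
  have bwd : ∀ k, k < n → p.getVert (k + 1) = q.getVert (k + 1) →
      p.getVert k = q.getVert k := by
    intro k hk he
    have hp1 : Γ.Adj (p.getVert (k + 1)) (p.getVert k) :=
      (p.adj_getVert_succ (by omega)).symm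
    have hq1 : Γ.Adj (p.getVert (k + 1)) (q.getVert k) := by
      rw [he]; exact (q.adj_getVert_succ (by omega)).symm
    exact hf hp1 hq1 (h k (by omega))
  have key : ∀ k ≤ n, p.getVert k = q.getVert k := by
    have up : ∀ k, i ≤ k → k ≤ n → p.getVert k = q.getVert k := by
      intro k hik
      induction k, hik using Nat.le_induction with
      | base => exact fun _ => hE
      | succ m hm ihm => exact fun hmn => fwd m (by omega) (ihm (by omega))
    have down : ∀ j, p.getVert (i - j) = q.getVert (i - j) := by
      intro j
      induction j with
      | zero => simpa using hE
      | succ m ihm =>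
        rcases le_or_gt i m with hle | hlt
        · have : i - (m + 1) = i - m := by omega
          rw [this]; exact ihm
        · have h1 : i - (m + 1) + 1 = i - m := by omega
          apply bwd (i - (m + 1)) (by omega)
          rw [h1]; exact ihm
    intro k hk
    rcases le_or_gt i k with h1 | h1
    · exact up k h1 hk
    · have : k = i - (i - k) := by omega
      rw [this]; exact down (i - k)
  have ha : a = a' := by
    have := key 0 (by omega)
    simpa using this
  have hb : b = b' := by
    have := key n le_rfl
    rw [← hp, p.getVert_length] at this
    rw [this, hp, ← hq, q.getVert_length]
    
  subst ha hb
  refine ⟨rfl, rfl, key, ?_⟩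
  have : p = q := walk_ext_getVert p q (hp.trans hq.symm) (fun k => by
    rcases le_or_gt k n with hk | hk
    · exact key k hk
    · rw [p.getVert_of_length_le (by omega), q.getVert_of_length_le (by omega)])
  exact heq_of_eq this
end

section
/- Let c be a closed walk of length n ≥ 3 based at a vertex a in a simple graph which is cyclically reduced: c.getVert (k−1) ≠ c.getVert (k+1) for all 1 ≤ k ≤ n−1, and c.getVert 1 ≠ c.getVert (n−1). Then for every integer m ≥ 1, the m-fold concatenation c^m = c.append(c).append…(c) is a cyclically reduced closed walk of length m·n based at a. (This is the replacement of an immersed cycle C_m → Γ by its composition with the covering map C_{3m} → C_m used in the proof of Lemma 3.1 to ensure boundary cycles have length at least 3.) -/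
open SimpleGraph

/-- The `m`-fold concatenation of a closed walk with itself. -/
def SimpleGraph.Walk.iterConcat {V : Type*} {G : SimpleGraph V} {a : V}
    (c : G.Walk a a) : ℕ → G.Walk a a
  | 0 => SimpleGraph.Walk.nil
  | m + 1 => (SimpleGraph.Walk.iterConcat c m).append c

lemma iterConcat_length {V : Type*} {G : SimpleGraph V} {a : V}
    (c : G.Walk a a) (m : ℕ) : (c.iterConcat m).length = m * c.length := by
  induction m with
  | zero => simp [SimpleGraph.Walk.iterConcat]
  | succ m ih =>
    simp [SimpleGraph.Walk.iterConcat, SimpleGraph.Walk.length_append, ih, Nat.succ_mul]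

lemma iterConcat_getVert {V : Type*} {G : SimpleGraph V} {a : V} {n : ℕ}
    (c : G.Walk a a) (hc : c.length = n) (hn : 0 < n) (m k : ℕ) (hk : k ≤ m * n) :
    (c.iterConcat m).getVert k = c.getVert (k % n) := by
  induction m generalizing k with
  | zero =>
    have hk0 : k = 0 := by simpa using hk
    subst hk0
    simp [SimpleGraph.Walk.iterConcat]
  | succ m ih =>
    simp only [SimpleGraph.Walk.iterConcat, SimpleGraph.Walk.getVert_append,
      iterConcat_length, hc]
    by_cases h : k < m * n
    · rw [if_pos h, ih k h.le]
    · rw [if_neg h]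
      push_neg at h
      have e : (m + 1) * n = m * n + n := by ring
      rcases Nat.lt_or_ge (k - m * n) n with h2 | h2
      · have : k % n = k - m * n := by
          conv_lhs => rw [← Nat.sub_add_cancel h]
          rw [Nat.add_mul_mod_self_right, Nat.mod_eq_of_lt h2]
        rw [this]
      · have hk' : k = (m + 1) * n := by omega
        subst hk'
        rw [Nat.mul_mod_left]
        have : (m + 1) * n - m * n = n := by omega
        rw [this, ← hc, SimpleGraph.Walk.getVert_length]
        simp

/-- The `m`-fold concatenation (`m ≥ 1`) of a cyclically reduced closed walk of
length `n ≥ 3` is a cyclically reduced closed walk of length `m * n`. -/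
theorem iterConcat_cyclicallyReduced {V : Type*} {G : SimpleGraph V} {a : V}
    {n : ℕ} (c : G.Walk a a) (hc : c.length = n) (hn : 3 ≤ n)
    (hnb : ∀ k, 1 ≤ k → k ≤ n - 1 → c.getVert (k - 1) ≠ c.getVert (k + 1))
    (hcyc : c.getVert 1 ≠ c.getVert (n - 1))
    (m : ℕ) (hm : 1 ≤ m) :
    (c.iterConcat m).length = m * n ∧
      (∀ k, 1 ≤ k → k ≤ m * n - 1 →
        (c.iterConcat m).getVert (k - 1) ≠ (c.iterConcat m).getVert (k + 1)) ∧
      (c.iterConcat m).getVert 1 ≠ (c.iterConcat m).getVert (m * n - 1) := by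
  have hn0 : 0 < n := by omega
  have hgv := iterConcat_getVert c hc hn0 m
  have hmn : n ≤ m * n := by nlinarith
  have hcn : c.getVert n = c.getVert 0 := by
    rw [← hc, SimpleGraph.Walk.getVert_length]; simp
  refine ⟨by rw [iterConcat_length, hc], ?_, ?_⟩
  · intro k hk1 hk2
    rw [hgv (k - 1) (by omega), hgv (k + 1) (by omega)]
    obtain ⟨r, q, hrlt, rfl⟩ : ∃ r q, r < n ∧ k = r + q * n :=
      ⟨k % n, k / n, Nat.mod_lt _ hn0, by rw [Nat.mod_add_div']⟩
    rcases Nat.eq_zero_or_pos r with hr0 | hrpos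
    · subst hr0
      obtain ⟨q', rfl⟩ : ∃ q', q = q' + 1 := by
        cases q with
        | zero => simp at hk1
        | succ q => exact ⟨q, rfl⟩
      have e : (q' + 1) * n = q' * n + n := by ring
      have e1 : 0 + (q' + 1) * n - 1 = (n - 1) + q' * n := by omega
      have e2 : 0 + (q' + 1) * n + 1 = 1 + (q' + 1) * n := by omega
      rw [e1, e2, Nat.add_mul_mod_self_right, Nat.add_mul_mod_self_right,
        Nat.mod_eq_of_lt (by omega), Nat.mod_eq_of_lt (by omega)]
      exact hcyc.symm
    · have e1 : r + q * n - 1 = (r - 1) + q * n := by omega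
      rw [e1, Nat.add_mul_mod_self_right, Nat.mod_eq_of_lt (by omega)]
      rcases Nat.lt_or_ge (r + 1) n with hrn | hrn
      · have e2 : r + q * n + 1 = (r + 1) + q * n := by omega
        rw [e2, Nat.add_mul_mod_self_right, Nat.mod_eq_of_lt hrn]
        exact hnb r hrpos (by omega)
      · have hrn1 : r = n - 1 := by omega
        have e3 : r + q * n + 1 = 0 + (q + 1) * n := by
          have : (q + 1) * n = q * n + n := by ring
          omega
        rw [e3, Nat.add_mul_mod_self_right, Nat.zero_mod, ← hcn]
        have := hnb (n - 1) (by omega) (le_refl _)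
        have heq : n - 1 - 1 = n - 2 := by omega
        have heq2 : n - 1 + 1 = n := by omega
        rw [heq, heq2] at this
        rw [hrn1, heq]
        simpa using this
  · rw [hgv 1 (by omega), hgv (m * n - 1) (by omega)]
    obtain ⟨m', rfl⟩ : ∃ m', m = m' + 1 := ⟨m - 1, by omega⟩
    have e : (m' + 1) * n = m' * n + n := by ring
    have e1 : (m' + 1) * n - 1 = (n - 1) + m' * n := by omega
    rw [e1, Nat.add_mul_mod_self_right, Nat.mod_eq_of_lt (by omega),
      Nat.mod_eq_of_lt (by omega)]
    exact hcyc
end
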